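/- In the first-differenced two-way fixed effects model Δy_g = Δf_g'ψ + Δε_g, if the origin and destination firms of worker g are connected in the firm mobility network by a path not passing through g of length n_g edges, then the leverage of observation g satisfies P_gg ≤ n_g/(1 + n_g). -/

import Mathlib

open Matrix BigOperators Finset

lemma darts_telescope {V : Type*} {G : SimpleGraph V} (φ : V → ℝ) :
    ∀ {a b : V} (p : G.Walk a b),
      (p.darts.map (fun d => φ d.snd - φ d.fst)).sum = φ b - φ a := by
  intro a b p
  induction p with
  | nil => simp
  | cons h q ih => simp [SimpleGraph.Walk.darts_cons, ih]

lemma quad_form (J : ℕ) (u x : Fin J → ℝ) :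
    ((vecMulVec u u).mulVec x) ⬝ᵥ x = (u ⬝ᵥ x)^2 := by
  simp only [Matrix.mulVec, dotProduct, vecMulVec_apply, sq, Finset.sum_mul,
    Finset.mul_sum]
  apply Finset.sum_congr rfl; intro i _
  apply Finset.sum_congr rfl; intro j _
  ring

lemma sum_mulVec' {N J : ℕ} (F : Fin N → Matrix (Fin J) (Fin J) ℝ) (x : Fin J → ℝ) :
    ((∑ g', F g').mulVec x) ⬝ᵥ x = ∑ g', ((F g').mulVec x) ⬝ᵥ x := by
  simp only [Matrix.mulVec, dotProduct, Finset.sum_apply, Matrix.sum_apply,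
    Finset.sum_mul]
  conv_lhs => enter [2,y]; rw [Finset.sum_comm]
  rw [Finset.sum_comm]

lemma list_sq_nonneg (l : List ℝ) : 0 ≤ (l.map (fun t => t^2)).sum := by
  apply List.sum_nonneg
  intro x hx
  obtain ⟨t, _, rfl⟩ := List.mem_map.mp hx
  positivity

lemma list_cauchy (l : List ℝ) : l.sum ^ 2 ≤ l.length * (l.map (fun t => t^2)).sum := by
  induction l with
  | nil => simp
  | cons a l ih =>
    have hQ := list_sq_nonneg l
    simp only [List.sum_cons, List.length_cons, List.map_cons, Nat.cast_add, Nat.cast_one]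
    rcases Nat.eq_zero_or_pos l.length with h0 | hpos
    · have hl : l = [] := List.length_eq_zero_iff.mp h0
      subst hl; simp
    · have hn : (0:ℝ) < l.length := by exact_mod_cast hpos
      nlinarith [sq_nonneg ((l.length:ℝ)*a - l.sum), ih, hQ, hn,
        mul_le_mul_of_nonneg_left ih (le_of_lt hn)]

lemma walk_from_chain {V : Type*} {G : SimpleGraph V} :
    ∀ (m : ℕ) (c : Fin (m+1) → V),
      (∀ s : Fin m, c s.castSucc = c s.succ ∨ G.Adj (c s.castSucc) (c s.succ)) →
      ∃ p : G.Walk (c 0) (c (Fin.last m)), p.length ≤ m := by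
  intro m
  induction m with
  | zero => intro c _; exact ⟨SimpleGraph.Walk.nil, by simp⟩
  | succ n ih =>
    intro c h
    obtain ⟨q, hq⟩ := ih (fun i => c i.succ) (fun s => by
      have := h s.succ
      exact this)
    have hlast : (Fin.last n).succ = Fin.last (n+1) := Fin.succ_last n
    let q' : G.Walk (c (0 : Fin (n+1)).succ) (c (Fin.last (n+1))) :=
      q.copy rfl (congrArg c hlast)
    have hq' : q'.length ≤ n := by simpa [q', SimpleGraph.Walk.length_copy] using hq
    rcases h 0 with he | he
    · have he' : c 0 = c (0 : Fin (n+1)).succ := by simpa using he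
      exact ⟨q'.copy he'.symm rfl, by rw [SimpleGraph.Walk.length_copy]; exact hq'.trans (Nat.le_succ n)⟩
    · have hadj : G.Adj (c 0) (c (0 : Fin (n+1)).succ) := by simpa using he
      exact ⟨q'.cons hadj, Nat.succ_le_succ hq'⟩


/-- in the first-differenced two-way fixed effects model, if the
origin and destination firms of worker `g` are connected by a path of `m` edges
in the mobility network that does not use worker `g`, then the leverage satisfies
`P_gg ≤ m/(1+m)`. -/
theorem leverage_path_bound {N J : ℕ}
    (j₁ j₂ : Fin N → Fin (J + 1))
    (ι : Fin (J + 1) → Fin J → ℝ)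
    (hι0 : ι 0 = 0)
    (hι : ∀ j : Fin J, ι j.succ = fun i => if i = j then 1 else 0)
    (Δf : Fin N → Fin J → ℝ)
    (hΔf : ∀ g, Δf g = ι (j₂ g) - ι (j₁ g))
    (S : Matrix (Fin J) (Fin J) ℝ)
    (hS : S = ∑ g, vecMulVec (Δf g) (Δf g))
    (hSinv : IsUnit S.det)
    (g : Fin N) (m : ℕ)
    (c : Fin (m + 1) → Fin (J + 1))
    (hc0 : c 0 = j₁ g) (hcm : c (Fin.last m) = j₂ g)
    (w : Fin m → Fin N)
    (hw : ∀ s, w s ≠ g)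
    (hpath : ∀ s : Fin m,
      (j₁ (w s) = c s.castSucc ∧ j₂ (w s) = c s.succ) ∨
      (j₁ (w s) = c s.succ ∧ j₂ (w s) = c s.castSucc)) :
    Δf g ⬝ᵥ S⁻¹.mulVec (Δf g) ≤ (m : ℝ) / (1 + m) := by
  classical
  set v : Fin J → ℝ := Δf g with hv
  set x : Fin J → ℝ := S⁻¹.mulVec v with hx
  have hSx : S.mulVec x = v := by
    rw [hx, Matrix.mulVec_mulVec, Matrix.mul_nonsing_inv S hSinv, Matrix.one_mulVec]
  set a : Fin N → ℝ := fun g' => Δf g' ⬝ᵥ x with ha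
  have hL : v ⬝ᵥ x = ∑ g', (a g')^2 := by
    calc v ⬝ᵥ x = (S.mulVec x) ⬝ᵥ x := by rw [hSx]
    _ = ∑ g', ((vecMulVec (Δf g') (Δf g')).mulVec x) ⬝ᵥ x := by rw [hS, sum_mulVec']
    _ = ∑ g', (a g')^2 := by
        refine Finset.sum_congr rfl fun g' _ => ?_
        rw [quad_form]
  set L : ℝ := v ⬝ᵥ x with hLdef
  have hag : a g = L := rfl
  set φ : Fin (J + 1) → ℝ := fun j => ι j ⬝ᵥ x with hφ
  have haφ : ∀ g', a g' = φ (j₂ g') - φ (j₁ g') := by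
    intro g'
    show Δf g' ⬝ᵥ x = ι (j₂ g') ⬝ᵥ x - ι (j₁ g') ⬝ᵥ x
    rw [hΔf g', sub_dotProduct]
  set G : SimpleGraph (Fin (J + 1)) :=
    SimpleGraph.fromRel (fun y z => ∃ g', g' ≠ g ∧ j₁ g' = y ∧ j₂ g' = z) with hG
  have hchain : ∀ s : Fin m, c s.castSucc = c s.succ ∨ G.Adj (c s.castSucc) (c s.succ) := by
    intro s
    by_cases heq : c s.castSucc = c s.succ
    · exact Or.inl heq
    · refine Or.inr ?_
      rw [hG, SimpleGraph.fromRel_adj]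
      refine ⟨heq, ?_⟩
      rcases hpath s with ⟨h1, h2⟩ | ⟨h1, h2⟩
      · exact Or.inl ⟨w s, hw s, h1, h2⟩
      · exact Or.inr ⟨w s, hw s, h1, h2⟩
  obtain ⟨p0, hp0⟩ := walk_from_chain m c hchain
  set p := p0.bypass with hpdef
  have hpath' : p.IsPath := p0.bypass_isPath
  have hplen : p.length ≤ m := (SimpleGraph.Walk.length_bypass_le p0).trans hp0
  have hWex : ∀ d : G.Dart, ∃ g', g' ≠ g ∧
      ((j₁ g' = d.fst ∧ j₂ g' = d.snd) ∨ (j₁ g' = d.snd ∧ j₂ g' = d.fst)) := by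
    intro d
    have hadj := (SimpleGraph.fromRel_adj (fun y z => ∃ g', g' ≠ g ∧ j₁ g' = y ∧ j₂ g' = z) d.fst d.snd).mp d.adj
    rcases hadj.2 with ⟨g', hne, h1, h2⟩ | ⟨g', hne, h1, h2⟩
    · exact ⟨g', hne, Or.inl ⟨h1, h2⟩⟩
    · exact ⟨g', hne, Or.inr ⟨h1, h2⟩⟩
  choose W hWne hWor using hWex
  set T : List ℝ := p.darts.map (fun d => φ d.snd - φ d.fst) with hT
  have hTsum : T.sum = L := by
    rw [hT, darts_telescope, hcm, hc0, ← haφ g, hag]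
  have hTlen : T.length = p.length := by
    rw [hT, List.length_map, SimpleGraph.Walk.length_darts]
  have hsq : ∀ d : G.Dart, (φ d.snd - φ d.fst)^2 = (a (W d))^2 := by
    intro d
    rcases hWor d with ⟨h1, h2⟩ | ⟨h1, h2⟩
    · rw [haφ, h1, h2]
    · rw [haφ, h1, h2]; ring
  set u : List (Fin N) := p.darts.map W with hu
  have hTQ : (T.map (fun t => t^2)).sum = (u.map (fun g' => (a g')^2)).sum := by
    rw [hT, hu, List.map_map, List.map_map]
    congr 1
    apply List.map_congr_left
    intro d _
    exact hsq d
  have hunodup : u.Nodup := by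
    have hedges : p.edges.Nodup := hpath'.isTrail.edges_nodup
    have hEq : p.edges = u.map (fun g' => s(j₁ g', j₂ g')) := by
      have h0 : p.edges = p.darts.map SimpleGraph.Dart.edge := rfl
      rw [h0, hu, List.map_map]
      apply List.map_congr_left
      intro d _
      show d.edge = s(j₁ (W d), j₂ (W d))
      rcases hWor d with ⟨h1, h2⟩ | ⟨h1, h2⟩
      · rw [h1, h2]; rfl
      · rw [h1, h2, Sym2.eq_swap]; rfl
    rw [hEq] at hedges
    exact hedges.of_map _
  have husub : u.toFinset ⊆ Finset.univ.erase g := by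
    intro g' hg'
    rw [List.mem_toFinset, hu, List.mem_map] at hg'
    obtain ⟨d, _, rfl⟩ := hg'
    exact Finset.mem_erase.mpr ⟨hWne d, Finset.mem_univ _⟩
  set Q : ℝ := (T.map (fun t => t^2)).sum with hQdef
  have hQ0 : 0 ≤ Q := list_sq_nonneg T
  have hQle : Q ≤ ∑ g' ∈ Finset.univ.erase g, (a g')^2 := by
    rw [hTQ, ← List.sum_toFinset _ hunodup]
    exact Finset.sum_le_sum_of_subset_of_nonneg husub (fun _ _ _ => sq_nonneg _)
  have hLQ : L^2 + Q ≤ L := by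
    have hsplit : ∑ g', (a g')^2 = (a g)^2 + ∑ g' ∈ Finset.univ.erase g, (a g')^2 :=
      (Finset.add_sum_erase _ _ (Finset.mem_univ g)).symm
    have h1 := hL
    rw [hsplit, hag] at h1
    linarith
  have hCS : L^2 ≤ (p.length : ℝ) * Q := by
    have h := list_cauchy T
    rwa [hTsum, hTlen] at h
  have hL0 : 0 ≤ L := by rw [hL]; positivity
  have hkm : (p.length : ℝ) ≤ m := by exact_mod_cast hplen
  have hm0 : (0:ℝ) ≤ m := Nat.cast_nonneg m
  have hm1 : (0:ℝ) < 1 + m := by positivity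
  rw [le_div_iff₀ hm1]
  rcases eq_or_lt_of_le hL0 with hLz | hLpos
  · nlinarith
  · have h1 : (m:ℝ) * L ≥ ((m:ℝ) + 1) * L^2 := by nlinarith
    nlinarith [mul_pos hLpos hLpos]
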